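/- Let B = J_{(μ₁,...,μ_t)} be a nilpotent Jordan matrix with all block sizes μ_i ≥ 2, and let A satisfy AB = BA = 0. Writing A = [A_{ij}] in block form according to the partition (μ₁,...,μ_t), each block A_{ij} has at most one nonzero entry, located in position (1, μ_j) (top-right corner) of the block. -/

import Mathlib

/-- The `n × n` upper-triangular nilpotent Jordan block (ones on the superdiagonal). -/
def jordanBlock (F : Type*) [Zero F] [One F] (n : ℕ) : Matrix (Fin n) (Fin n) F :=
  Matrix.of fun i j => if (i : ℕ) + 1 = (j : ℕ) then 1 else 0

/-- Let `B = J_{(μ₁,…,μ_t)}` be a direct sum of nilpotent Jordan blocks with all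
sizes `μ_i ≥ 2` (sizes weakly decreasing), and let `A` satisfy `AB = BA = 0`.  Then
in the block decomposition of `A` according to `(μ₁,…,μ_t)`, every block `A_{ij}` has
at most one nonzero entry, located in the top-right corner, i.e. in position
`(1, μ_j)` of the block. -/
theorem stmt7 {F : Type*} [Field F] {t : ℕ} (μ : Fin t → ℕ)
    (hμ2 : ∀ i, 2 ≤ μ i) (hμmono : Antitone μ)
    (A : Matrix ((i : Fin t) × Fin (μ i)) ((i : Fin t) × Fin (μ i)) F)
    (hAB : A * Matrix.blockDiagonal' (fun i => jordanBlock F (μ i)) = 0)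
    (hBA : Matrix.blockDiagonal' (fun i => jordanBlock F (μ i)) * A = 0) :
    ∀ (i j : Fin t) (r : Fin (μ i)) (s : Fin (μ j)),
      A ⟨i, r⟩ ⟨j, s⟩ ≠ 0 → (r : ℕ) = 0 ∧ (s : ℕ) = μ j - 1 := by
  intro i j r s hA
  set B := Matrix.blockDiagonal' (fun i => jordanBlock F (μ i)) with hBdef
  constructor
  · by_contra hr
    have hr1 : 1 ≤ (r : ℕ) := Nat.one_le_iff_ne_zero.mpr hr
    have hrlt : (r : ℕ) - 1 < μ i := lt_of_le_of_lt (Nat.sub_le _ _) r.isLt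
    have key : (B * A) ⟨i, ⟨(r : ℕ) - 1, hrlt⟩⟩ ⟨j, s⟩ = A ⟨i, r⟩ ⟨j, s⟩ := by
      rw [Matrix.mul_apply]
      rw [Finset.sum_eq_single (⟨i, r⟩ : (i : Fin t) × Fin (μ i))]
      · rw [hBdef, Matrix.blockDiagonal'_apply_eq]
        have h1 : (r : ℕ) - 1 + 1 = (r : ℕ) := Nat.sub_add_cancel hr1
        simp [jordanBlock, h1]
      · rintro ⟨i', b⟩ _ hz
        by_cases hii : i' = i
        · subst hii
          have hbr : b ≠ r := fun h => hz (by rw [h])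
          have hb : ¬ ((r : ℕ) - 1 + 1 = (b : ℕ)) := fun h => hbr (Fin.ext (by omega))
          rw [hBdef, Matrix.blockDiagonal'_apply_eq]
          simp [jordanBlock, hb]
        · rw [hBdef, Matrix.blockDiagonal'_apply_ne _ _ _ (fun h => hii h.symm)]
          simp
      · intro h; exact absurd (Finset.mem_univ _) h
    rw [hBA] at key
    exact hA (by simpa using key.symm)
  · by_contra hs
    have hslt : (s : ℕ) + 1 < μ j := by have := s.isLt; omega
    have key : (A * B) ⟨i, r⟩ ⟨j, ⟨(s : ℕ) + 1, hslt⟩⟩ = A ⟨i, r⟩ ⟨j, s⟩ := by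
      rw [Matrix.mul_apply]
      rw [Finset.sum_eq_single (⟨j, s⟩ : (i : Fin t) × Fin (μ i))]
      · rw [hBdef, Matrix.blockDiagonal'_apply_eq]
        simp [jordanBlock]
      · rintro ⟨j', b⟩ _ hz
        by_cases hjj : j' = j
        · subst hjj
          have hbs : b ≠ s := fun h => hz (by rw [h])
          have hb : ¬ ((b : ℕ) + 1 = (s : ℕ) + 1) := fun h => hbs (Fin.ext (by omega))
          rw [hBdef, Matrix.blockDiagonal'_apply_eq]
          simp [jordanBlock, hb, show ¬ ((b : ℕ) = (s : ℕ)) from fun h => hbs (Fin.ext h)]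
        · rw [hBdef, Matrix.blockDiagonal'_apply_ne _ _ _ hjj]
          simp
      · intro h; exact absurd (Finset.mem_univ _) h
    rw [hAB] at key
    exact hA (by simpa using key.symm)
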